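/- Let N = 2n+2 and let T ⪯ P be type D Schubert symbols with t(T) ≠ t(P). Suppose c ∈ [1,n] satisfies: c ∉ [T] and [c+1, n+1] ⊆ [P] ∩ [T] ∩ [P̃], where P̃ is the modified type D construction. Then c ∉ [P] ∩ [P̃]. -/

import Mathlib

open scoped Classical

/-- `p : ℕ → ℕ` encodes a Schubert symbol `{p 1 < … < p m} ⊆ [1,N]`
with the conventions `p 0 = 0` and `p (m+1) = N+1`, and the isotropic
condition that no two elements sum to `N+1`. -/
structure IsSSym (N m : ℕ) (p : ℕ → ℕ) : Prop where
  zero : p 0 = 0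
  top : p (m+1) = N+1
  mono : ∀ i j, i < j → j ≤ m+1 → p i < p j
  ub : ∀ i, 1 ≤ i → i ≤ m → p i ≤ N
  iso : ∀ i j, 1 ≤ i → i ≤ m → 1 ≤ j → j ≤ m → p i + p j ≠ N+1

/-- The underlying set `{p 1, …, p m}` of a Schubert symbol. -/
def symSet (m : ℕ) (p : ℕ → ℕ) : Finset ℕ := (Finset.Icc 1 m).image p

/-- Componentwise order `t_i ≤ p_i` on Schubert symbols. -/
def leS (m : ℕ) (t p : ℕ → ℕ) : Prop := ∀ i, 1 ≤ i → i ≤ m → t i ≤ p i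

/-- `c` is a visible cut of the Richardson diagram `D(P,T)`:
`p_i ≤ c < t_{i+1}` for some `0 ≤ i ≤ m`. -/
def visCut (m : ℕ) (p t : ℕ → ℕ) (c : ℕ) : Prop :=
  ∃ i, i ≤ m ∧ p i ≤ c ∧ c < t (i+1)

/-- `c` is an apparent cut of `D(P,T)`: `c` or `N−c` is a visible cut. -/
def appCut (N m : ℕ) (p t : ℕ → ℕ) (c : ℕ) : Prop :=
  visCut m p t c ∨ visCut m p t (N - c)

/-- `c` is a zero column of `D(P,T)`: `p_j < c < t_{j+1}` for some `j`. -/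
def zeroCol (m : ℕ) (p t : ℕ → ℕ) (c : ℕ) : Prop :=
  ∃ j, j ≤ m ∧ p j < c ∧ c < t (j+1)

/-- `(j,c)` is a lone star of `D(P,T)` with respect to the cut predicate `cut`. -/
def loneStar (m : ℕ) (p t : ℕ → ℕ) (cut : ℕ → Prop) (j c : ℕ) : Prop :=
  1 ≤ j ∧ j ≤ m ∧ t j ≤ c ∧ c ≤ p j ∧
    ((c = t j ∧ cut c) ∨ (c = p j ∧ cut (c-1)))

/-- `c ∈ 𝓛_{P,T}` : `c` is a zero column, or column `N+1−c` contains a lone star. -/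
def LSet (N m : ℕ) (p t : ℕ → ℕ) (cut : ℕ → Prop) (c : ℕ) : Prop :=
  1 ≤ c ∧ c ≤ N ∧
    (zeroCol m p t c ∨ ∃ j, loneStar m p t cut j (N+1-c))

/-- `[P] = P ∪ {N+1−p : p ∈ P}`. -/
def brP (N : ℕ) (P : Finset ℕ) : Finset ℕ := P ∪ P.image (fun p => N+1-p)

/-- The type-`D` type function `t(P) ∈ {0,1,2}`: if `n+1 ∈ [P]` it is the parity of
`#([1,n+1] \ P)`; otherwise it is `2`. -/
def tD (n : ℕ) (P : Finset ℕ) : ℕ :=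
  if (n+1) ∈ P ∨ (n+2) ∈ P then (Finset.Icc 1 (n+1) \ P).card % 2 else 2

/-- The type-`D` Bruhat order `T ⪯ P` on Schubert symbols for `OG(m, 2n+2)`. -/
def bruhatD (n m : ℕ) (t p : ℕ → ℕ) : Prop :=
  leS m t p ∧ ∀ c, 1 ≤ c → c ≤ n →
    Finset.Icc (c+1) (n+1) ⊆ brP (2*n+2) (symSet m p) →
    Finset.Icc (c+1) (n+1) ⊆ brP (2*n+2) (symSet m t) →
    ((symSet m p) ∩ Finset.Icc 1 c).card = ((symSet m t) ∩ Finset.Icc 1 c).card →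
    tD n (symSet m p) = tD n (symSet m t)

/-- The exceptional center cut `n+1` exists in `D(P,T)`:
`p_i = n+2 ≤ t_{i+1}` or `t_i = n+1 ≥ p_{i−1}` for some `i`. -/
def centerCut (n m : ℕ) (p t : ℕ → ℕ) : Prop :=
  ∃ i, 1 ≤ i ∧ i ≤ m ∧
    ((p i = n+2 ∧ n+2 ≤ t (i+1)) ∨ (t i = n+1 ∧ p (i-1) ≤ n+1))

/-- `c ∈ [1,n]` is a cut candidate of `D(P,T)`:
`[c+1,n+1] ⊆ [P] ∩ [T]` and `#(T ∩ [1,c]) = #(P ∩ [1,c]) + 1`. -/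
def cutCandidate (n m : ℕ) (p t : ℕ → ℕ) (c : ℕ) : Prop :=
  1 ≤ c ∧ c ≤ n ∧
  Finset.Icc (c+1) (n+1) ⊆ brP (2*n+2) (symSet m p) ∧
  Finset.Icc (c+1) (n+1) ⊆ brP (2*n+2) (symSet m t) ∧
  ((symSet m t) ∩ Finset.Icc 1 c).card = ((symSet m p) ∩ Finset.Icc 1 c).card + 1

/-- Exceptional cuts of `D(P,T)` in type `D`. -/
def excCut (n m : ℕ) (p t : ℕ → ℕ) (c : ℕ) : Prop :=
  (centerCut n m p t ∧ c = n+1) ∨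
  (tD n (symSet m t) ≠ tD n (symSet m p) ∧
    ∃ d, cutCandidate n m p t d ∧ (c = d ∨ c = 2*n+2 - d))

/-- The type-`D` cut set: apparent cuts together with exceptional cuts. -/
def cutD (n m : ℕ) (p t : ℕ → ℕ) (c : ℕ) : Prop :=
  appCut (2*n+2) m p t c ∨ excCut n m p t c

/-- The construction of the Schubert symbol `P'` from `T ⪯ P` in types `B` and `C`. -/
noncomputable def Pp (N m : ℕ) (p t : ℕ → ℕ) (i : ℕ) : ℕ :=
  if p i < t (i+1) then p i
  else if ¬ appCut N m p t (t (i+1) - 1) then t (i+1)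
  else ((Finset.Icc (t i) (t (i+1) - 1)).filter
        (fun c => ¬ LSet N m p t (appCut N m p t) c)).sup id

/-- The modified construction of the Schubert symbol `P̃` from `T ⪯ P` in type `D`. -/
noncomputable def Ptil (n m : ℕ) (p t : ℕ → ℕ) (i : ℕ) : ℕ :=
  if p i < t (i+1) then p i
  else if ¬ cutD n m p t (t (i+1) - 1) then
    (if t (i+1) = n+1 ∨ t (i+1) = n+2 then 2*n+3 - t (i+1) else t (i+1))
  else ((Finset.Icc (t i) (t (i+1) - 1)).filter
        (fun c => ¬ LSet (2*n+2) m p t (cutD n m p t) c)).sup id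

/-- A critical window `[c+1, N−c]` in `D(P,T)` (type `D`, defined when `t(T) ≠ t(P)`):
`c` and `N−c` are visible cuts and `[c+1,n+1] ⊆ [T] ∩ [P]`. -/
def critWindow (n m : ℕ) (p t : ℕ → ℕ) (c : ℕ) : Prop :=
  c ≤ n ∧ tD n (symSet m t) ≠ tD n (symSet m p) ∧
  visCut m p t c ∧ visCut m p t (2*n+2 - c) ∧
  Finset.Icc (c+1) (n+1) ⊆ brP (2*n+2) (symSet m t) ∧
  Finset.Icc (c+1) (n+1) ⊆ brP (2*n+2) (symSet m p)

/-- The quadratic form `f_c = x_1 x_N + … + x_c x_{N+1−c}`. -/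
noncomputable def fquad (N : ℕ) (c : ℕ) (x : ℕ → ℂ) : ℂ := ∑ i ∈ Finset.Icc 1 c, x i * x (N+1-i)

/-- The variety `Z_{P,T}` (affine cone) cut out by quadratic equations `f_c = 0`
for `c` in a prescribed set `Q` and linear equations `x_c = 0` for `c ∈ 𝓛_{P,T}`. -/
def Zvar (N m : ℕ) (p t : ℕ → ℕ) (Q : ℕ → Prop) (cut : ℕ → Prop) : Set (ℕ → ℂ) :=
  {x | (∀ c, Q c → fquad N c x = 0) ∧ ∀ c, LSet N m p t cut c → x c = 0}



/-- count of indices `j ∈ [1,m]` with `p j ≤ d`. -/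
def cnt (m : ℕ) (p : ℕ → ℕ) (d : ℕ) : ℕ :=
  ((Finset.Icc 1 m).filter (fun j => p j ≤ d)).card

lemma initseg {m : ℕ} {s : Finset ℕ} (hs : s ⊆ Finset.Icc 1 m)
    (hdc : ∀ i j, i ∈ Finset.Icc 1 m → j ∈ s → i ≤ j → i ∈ s) :
    s = Finset.Icc 1 s.card := by
  have h2 : s ⊆ Finset.Icc 1 s.card := by
    intro x hx
    have hx1 := Finset.mem_Icc.1 (hs hx)
    have hsub : Finset.Icc 1 x ⊆ s := by
      intro y hy
      have hy1 := Finset.mem_Icc.1 hy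
      exact hdc y x (Finset.mem_Icc.2 ⟨hy1.1, le_trans hy1.2 hx1.2⟩) hx hy1.2
    have hcard := Finset.card_le_card hsub
    rw [Nat.card_Icc] at hcard
    exact Finset.mem_Icc.2 ⟨hx1.1, by omega⟩
  refine Finset.eq_of_subset_of_card_le h2 ?_
  rw [Nat.card_Icc]; omega

section cntlem
variable {m : ℕ} {p : ℕ → ℕ}

lemma mono_le (hmono : ∀ i j, i < j → j ≤ m+1 → p i < p j) :
    ∀ i j, i ≤ j → j ≤ m+1 → p i ≤ p j := by
  intro i j hij hj
  rcases eq_or_lt_of_le hij with h | h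
  · exact h ▸ le_rfl
  · exact le_of_lt (hmono i j h hj)

lemma mono_gap (hmono : ∀ i j, i < j → j ≤ m+1 → p i < p j) :
    ∀ j, j ≤ m+1 → ∀ i, i ≤ j → p i + (j - i) ≤ p j := by
  intro j
  induction j with
  | zero =>
    intro _ i hi
    have : i = 0 := by omega
    subst this; omega
  | succ k ih =>
    intro hk i hi
    rcases Nat.lt_or_ge i (k+1) with h | h
    · have h1 := ih (by omega) i (by omega)
      have h2 := hmono k (k+1) (by omega) hk
      omega
    · have : i = k+1 := by omega
      subst this; omega

lemma cnt_filter_eq (hmono : ∀ i j, i < j → j ≤ m+1 → p i < p j) (d : ℕ) :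
    (Finset.Icc 1 m).filter (fun j => p j ≤ d) = Finset.Icc 1 (cnt m p d) := by
  apply initseg (Finset.filter_subset _ _)
  intro i j hi hj hij
  have hj' := Finset.mem_filter.1 hj
  have hjm := (Finset.mem_Icc.1 hj'.1).2
  refine Finset.mem_filter.2 ⟨hi, ?_⟩
  exact le_trans (mono_le hmono i j hij (by omega)) hj'.2

lemma cnt_char (hmono : ∀ i j, i < j → j ≤ m+1 → p i < p j) (d : ℕ)
    {j : ℕ} (hj1 : 1 ≤ j) (hjm : j ≤ m) :
    p j ≤ d ↔ j ≤ cnt m p d := by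
  constructor
  · intro h
    have : j ∈ (Finset.Icc 1 m).filter (fun j => p j ≤ d) :=
      Finset.mem_filter.2 ⟨Finset.mem_Icc.2 ⟨hj1, hjm⟩, h⟩
    rw [cnt_filter_eq hmono] at this
    exact (Finset.mem_Icc.1 this).2
  · intro h
    have : j ∈ Finset.Icc 1 (cnt m p d) := Finset.mem_Icc.2 ⟨hj1, h⟩
    rw [← cnt_filter_eq hmono] at this
    exact (Finset.mem_filter.1 this).2

lemma cnt_le_m (d : ℕ) : cnt m p d ≤ m := by
  have := Finset.card_filter_le (Finset.Icc 1 m) (fun j => p j ≤ d)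
  rw [Nat.card_Icc] at this
  unfold cnt; omega

/-- value at index `cnt+1` exceeds `d` (provided `d < p (m+1)`). -/
lemma cnt_succ_gt (hmono : ∀ i j, i < j → j ≤ m+1 → p i < p j) (d : ℕ)
    (htop : d < p (m+1)) : d < p (cnt m p d + 1) := by
  by_cases h : cnt m p d + 1 ≤ m
  · by_contra hle
    push_neg at hle
    have := (cnt_char hmono d (by omega) h).1 hle
    omega
  · have hm : cnt m p d ≤ m := cnt_le_m (p := p) d
    have : cnt m p d + 1 = m + 1 := by omega
    rw [this]; exact htop

lemma cnt_val_le (hmono : ∀ i j, i < j → j ≤ m+1 → p i < p j) (d : ℕ)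
    (h1 : 1 ≤ cnt m p d) : p (cnt m p d) ≤ d :=
  (cnt_char hmono d h1 (cnt_le_m d)).2 le_rfl

lemma cnt_mono_d {d d' : ℕ} (h : d ≤ d') : cnt m p d ≤ cnt m p d' := by
  apply Finset.card_le_card
  intro x hx
  have := Finset.mem_filter.1 hx
  exact Finset.mem_filter.2 ⟨this.1, le_trans this.2 h⟩

/-- If `p k ≤ x < p (k+1)` then `cnt m p x = k`. -/
lemma cnt_between (hmono : ∀ i j, i < j → j ≤ m+1 → p i < p j)
    {k x : ℕ} (hkm : k ≤ m) (h1 : p k ≤ x) (h2 : x < p (k+1)) :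
    cnt m p x = k := by
  have hub : cnt m p x ≤ k := by
    by_contra h
    push_neg at h
    have hm : cnt m p x ≤ m := cnt_le_m (p := p) x
    have := (cnt_char hmono x (j := k+1) (by omega) (by omega)).2 h
    omega
  have hlb : k ≤ cnt m p x := by
    rcases Nat.eq_zero_or_pos k with hk | hk
    · omega
    · exact (cnt_char hmono x hk hkm).1 h1
  omega

end cntlem
lemma symInterCard {m : ℕ} {p : ℕ → ℕ} (hz : p 0 = 0)
    (hmono : ∀ i j, i < j → j ≤ m+1 → p i < p j) (d : ℕ) :
    (((Finset.Icc 1 m).image p) ∩ Finset.Icc 1 d).card = cnt m p d := by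
  have hset : ((Finset.Icc 1 m).image p) ∩ Finset.Icc 1 d
      = ((Finset.Icc 1 m).filter (fun j => p j ≤ d)).image p := by
    ext x
    simp only [Finset.mem_inter, Finset.mem_image, Finset.mem_filter, Finset.mem_Icc]
    constructor
    · rintro ⟨⟨j, ⟨hj1, hj2⟩, rfl⟩, h1, h2⟩
      exact ⟨j, ⟨⟨hj1, hj2⟩, h2⟩, rfl⟩
    · rintro ⟨j, ⟨⟨hj1, hj2⟩, hle⟩, rfl⟩
      refine ⟨⟨j, ⟨hj1, hj2⟩, rfl⟩, ?_, hle⟩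
      have := hmono 0 j (by omega) (by omega)
      omega
  rw [hset]
  apply Finset.card_image_of_injOn
  intro i hi j hj hij
  simp only [Finset.coe_filter, Set.mem_setOf_eq, Finset.mem_Icc] at hi hj
  by_contra hne
  rcases Nat.lt_or_ge i j with h | h
  · have := hmono i j h (by omega); omega
  · have : j < i := by omega
    have := hmono j i this (by omega); omega

lemma pair_cnt {n m c : ℕ} {q : ℕ → ℕ}
    (hmono : ∀ i j, i < j → j ≤ m+1 → q i < q j)
    (hiso : ∀ i j, 1 ≤ i → i ≤ m → 1 ≤ j → j ≤ m → q i + q j ≠ 2*n+3)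
    (hc1 : 1 ≤ c) (hcn : c ≤ n)
    (hw : ∀ e, c+1 ≤ e → e ≤ n+1 → ∃ j, 1 ≤ j ∧ j ≤ m ∧ (q j = e ∨ q j = 2*n+3-e)) :
    cnt m q (2*n+2-c) = cnt m q c + (n+1-c) := by
  classical
  set S : Finset ℕ := (Finset.Icc 1 m).filter (fun j => c < q j ∧ q j ≤ 2*n+2-c) with hS
  have hsplit : cnt m q (2*n+2-c) = cnt m q c + S.card := by
    have hun : (Finset.Icc 1 m).filter (fun j => q j ≤ 2*n+2-c)
        = ((Finset.Icc 1 m).filter (fun j => q j ≤ c)) ∪ S := by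
      ext x
      simp only [hS, Finset.mem_filter, Finset.mem_union, Finset.mem_Icc]
      constructor
      · rintro ⟨h1, h2⟩
        rcases le_or_gt (q x) c with h | h
        · exact Or.inl ⟨h1, h⟩
        · exact Or.inr ⟨h1, h, h2⟩
      · rintro (⟨h1, h2⟩ | ⟨h1, h2, h3⟩)
        · exact ⟨h1, by omega⟩
        · exact ⟨h1, h3⟩
    have hdisj : Disjoint ((Finset.Icc 1 m).filter (fun j => q j ≤ c)) S := by
      rw [Finset.disjoint_left]
      intro x hx hx'
      simp only [hS, Finset.mem_filter] at hx hx'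
      omega
    unfold cnt
    rw [hun, Finset.card_union_of_disjoint hdisj]
  have hge : n+1-c ≤ S.card := by
    have hch : ∀ e, ∃ j, (c+1 ≤ e ∧ e ≤ n+1) → (1 ≤ j ∧ j ≤ m ∧ (q j = e ∨ q j = 2*n+3-e)) := by
      intro e
      by_cases h : c+1 ≤ e ∧ e ≤ n+1
      · obtain ⟨j, hj⟩ := hw e h.1 h.2
        exact ⟨j, fun _ => hj⟩
      · exact ⟨0, fun h' => absurd h' h⟩
    choose F hF using hch
    have := Finset.card_le_card_of_injOn F (s := Finset.Icc (c+1) (n+1)) (t := S) ?_ ?_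
    · rw [Nat.card_Icc] at this; omega
    · intro e he
      have he' := Finset.mem_Icc.1 he
      obtain ⟨h1, h2, h3⟩ := hF e he'
      simp only [hS, Finset.mem_coe, Finset.mem_filter, Finset.mem_Icc]
      refine ⟨⟨h1, h2⟩, ?_⟩
      omega
    · intro e he e' he' heq
      have he1 := Finset.mem_Icc.1 (Finset.mem_coe.1 he)
      have he2 := Finset.mem_Icc.1 (Finset.mem_coe.1 he')
      obtain ⟨_, _, h3⟩ := hF e he1
      obtain ⟨_, _, h3'⟩ := hF e' he2
      rw [heq] at h3
      omega
  have hle : S.card ≤ n+1-c := by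
    have := Finset.card_le_card_of_injOn (fun j => if q j ≤ n+1 then q j else 2*n+3 - q j)
      (s := S) (t := Finset.Icc (c+1) (n+1)) ?_ ?_
    · rw [Nat.card_Icc] at this; omega
    · intro j hj
      simp only [hS, Finset.mem_coe, Finset.mem_filter, Finset.mem_Icc] at hj
      by_cases h : q j ≤ n+1 <;> simp [h, Finset.mem_Icc] <;> omega
    · intro i hi j hj heq
      have hi' := Finset.mem_filter.1 (Finset.mem_coe.1 hi)
      have hj' := Finset.mem_filter.1 (Finset.mem_coe.1 hj)
      have hi1 := Finset.mem_Icc.1 hi'.1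
      have hj1 := Finset.mem_Icc.1 hj'.1
      simp only at heq
      have hqq : q i = q j := by
        by_cases h1 : q i ≤ n+1 <;> by_cases h2 : q j ≤ n+1 <;> simp [h1, h2] at heq
        · exact heq
        · exfalso
          exact hiso i j hi1.1 hi1.2 hj1.1 hj1.2 (by omega)
        · exfalso
          exact hiso i j hi1.1 hi1.2 hj1.1 hj1.2 (by omega)
        · omega
      by_contra hne
      rcases Nat.lt_or_ge i j with h | h
      · have := hmono i j h (by omega); omega
      · have : j < i := by omega
        have := hmono j i this (by omega); omega
  omega

/-- (type D) Suppose `T ⪯ P` with `t(T) ≠ t(P)`, and `c ∈ [1,n]`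
satisfies `c ∉ [T]` and `[c+1,n+1] ⊆ [P] ∩ [T] ∩ [P̃]` where `P̃` is the modified
type-D construction. Then `c ∉ [P] ∩ [P̃]`. -/
theorem stmt_14 (n m : ℕ) (p t : ℕ → ℕ)
    (hp : IsSSym (2*n+2) m p) (ht : IsSSym (2*n+2) m t)
    (hb : bruhatD n m t p)
    (htype : tD n (symSet m t) ≠ tD n (symSet m p))
    (c : ℕ) (hc1 : 1 ≤ c) (hcn : c ≤ n)
    (hcT : c ∉ brP (2*n+2) (symSet m t))
    (hsub : Finset.Icc (c+1) (n+1) ⊆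
       brP (2*n+2) (symSet m p) ∩ brP (2*n+2) (symSet m t) ∩
         brP (2*n+2) (symSet m (Ptil n m p t))) :
    c ∉ brP (2*n+2) (symSet m p) ∩ brP (2*n+2) (symSet m (Ptil n m p t)) := by
  intro hmem
  have hPt : c ∈ brP (2*n+2) (symSet m (Ptil n m p t)) := (Finset.mem_inter.1 hmem).2
  clear hmem
  have hpm := hp.mono
  have htm := ht.mono
  have hles : ∀ i, 1 ≤ i → i ≤ m → t i ≤ p i := hb.1
  have hptop : p (m+1) = 2*n+3 := by have := hp.top; omega
  have httop : t (m+1) = 2*n+3 := by have := ht.top; omega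
  have ht0 : t 0 = 0 := ht.zero
  have hp0 : p 0 = 0 := hp.zero
  -- window subsets
  have hsubP : Finset.Icc (c+1) (n+1) ⊆ brP (2*n+2) (symSet m p) :=
    fun x hx => (Finset.mem_inter.1 (Finset.mem_inter.1 (hsub hx)).1).1
  have hsubT : Finset.Icc (c+1) (n+1) ⊆ brP (2*n+2) (symSet m t) :=
    fun x hx => (Finset.mem_inter.1 (Finset.mem_inter.1 (hsub hx)).1).2
  have hsubPt : Finset.Icc (c+1) (n+1) ⊆ brP (2*n+2) (symSet m (Ptil n m p t)) :=
    fun x hx => (Finset.mem_inter.1 (hsub hx)).2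
  -- unpack brP memberships
  have hunpack : ∀ (q : ℕ → ℕ) (e : ℕ), 1 ≤ e → e ∈ brP (2*n+2) (symSet m q) →
      ∃ j, 1 ≤ j ∧ j ≤ m ∧ (q j = e ∨ q j = 2*n+3-e) := by
    intro q e he hmem
    rcases Finset.mem_union.1 hmem with h | h
    · obtain ⟨j, hj, rfl⟩ := Finset.mem_image.1 h
      have hj' := Finset.mem_Icc.1 hj
      exact ⟨j, hj'.1, hj'.2, Or.inl rfl⟩
    · obtain ⟨x, hx, hxe⟩ := Finset.mem_image.1 h
      obtain ⟨j, hj, rfl⟩ := Finset.mem_image.1 hx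
      have hj' := Finset.mem_Icc.1 hj
      exact ⟨j, hj'.1, hj'.2, Or.inr (by omega)⟩
  have hwT : ∀ e, c+1 ≤ e → e ≤ n+1 →
      ∃ j, 1 ≤ j ∧ j ≤ m ∧ (t j = e ∨ t j = 2*n+3-e) :=
    fun e h1 h2 => hunpack t e (by omega) (hsubT (Finset.mem_Icc.2 ⟨h1, h2⟩))
  have hwP : ∀ e, c+1 ≤ e → e ≤ n+1 →
      ∃ j, 1 ≤ j ∧ j ≤ m ∧ (p j = e ∨ p j = 2*n+3-e) :=
    fun e h1 h2 => hunpack p e (by omega) (hsubP (Finset.mem_Icc.2 ⟨h1, h2⟩))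
  -- c not in [T]
  have hcT' : ∀ j, 1 ≤ j → j ≤ m → t j ≠ c ∧ t j ≠ 2*n+3-c := by
    intro j hj1 hj2
    constructor
    · intro h
      exact hcT (Finset.mem_union.2 (Or.inl (Finset.mem_image.2
        ⟨j, Finset.mem_Icc.2 ⟨hj1, hj2⟩, h⟩)))
    · intro h
      refine hcT (Finset.mem_union.2 (Or.inr (Finset.mem_image.2
        ⟨t j, Finset.mem_image.2 ⟨j, Finset.mem_Icc.2 ⟨hj1, hj2⟩, rfl⟩, ?_⟩)))
      have := ht.ub j hj1 hj2
      omega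
  -- S3 family
  have hcntle : ∀ d, cnt m p d ≤ cnt m t d := by
    intro d
    apply Finset.card_le_card
    intro j hj
    have hj' := Finset.mem_filter.1 hj
    have hj'' := Finset.mem_Icc.1 hj'.1
    exact Finset.mem_filter.2 ⟨hj'.1, le_trans (hles j hj''.1 hj''.2) hj'.2⟩
  have hS3 : ∀ x, c ≤ x → x ≤ n → cnt m p x < cnt m t x := by
    intro x hx1 hx2
    rcases lt_or_eq_of_le (hcntle x) with h | h
    · exact h
    · exfalso
      apply htype
      symm
      apply hb.2 x (by omega) hx2
      · exact fun y hy => hsubP (Finset.Icc_subset_Icc (by omega) le_rfl hy)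
      · exact fun y hy => hsubT (Finset.Icc_subset_Icc (by omega) le_rfl hy)
      · show ((Finset.Icc 1 m).image p ∩ Finset.Icc 1 x).card
            = ((Finset.Icc 1 m).image t ∩ Finset.Icc 1 x).card
        rw [symInterCard hp0 hpm x, symInterCard ht0 htm x, h]
  -- counts
  have hpairP : cnt m p (2*n+2-c) = cnt m p c + (n+1-c) := by
    apply pair_cnt hpm _ hc1 hcn hwP
    intro i j h1 h2 h3 h4
    have := hp.iso i j h1 h2 h3 h4
    omega
  have hpairT : cnt m t (2*n+2-c) = cnt m t c + (n+1-c) := by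
    apply pair_cnt htm _ hc1 hcn hwT
    intro i j h1 h2 h3 h4
    have := ht.iso i j h1 h2 h3 h4
    omega
  set a := cnt m p c with ha_def
  set A := cnt m t c with hA_def
  set a2 := cnt m p (2*n+2-c) with ha2_def
  set A2 := cnt m t (2*n+2-c) with hA2_def
  have hAa : a < A := hS3 c le_rfl hcn
  have hAm : A ≤ m := cnt_le_m c
  have hA2m : A2 ≤ m := cnt_le_m _
  have ham : a ≤ m := cnt_le_m c
  have hAA2 : A < A2 := by omega
  have htA : t A ≤ c := cnt_val_le htm c (by omega)
  have htA1 : c < t (A+1) := cnt_succ_gt htm c (by omega)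
  have hpA : c < p A := by
    by_contra h
    push_neg at h
    have := (cnt_char hpm c (j := A) (by omega) hAm).1 h
    omega
  have hpA2 : 2*n+2-c < p A2 := by
    by_contra h
    push_neg at h
    have := (cnt_char hpm (2*n+2-c) (j := A2) (by omega) hA2m).1 h
    omega
  have htA2 : t A2 ≤ 2*n+2-c := cnt_val_le htm _ (by omega)
  have htA21 : 2*n+4-c ≤ t (A2+1) := by
    have h1 : 2*n+2-c < t (A2+1) := cnt_succ_gt htm _ (by omega)
    by_cases h : A2 + 1 ≤ m
    · have := (hcT' (A2+1) (by omega) h).2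
      omega
    · have : A2 + 1 = m + 1 := by omega
      rw [this, httop]; omega
  -- locators
  have hloc1 : ∀ i, c < t (i+1) → A ≤ i := by
    intro i h
    by_contra hlt
    push_neg at hlt
    have := mono_le htm (i+1) A hlt (by omega)
    omega
  have hloc2 : ∀ i, 2*n+2-c < t (i+1) → A2 ≤ i := by
    intro i h
    by_contra hlt
    push_neg at hlt
    have := mono_le htm (i+1) A2 hlt (by omega)
    omega
  have hploc : ∀ i, A ≤ i → i ≤ m+1 → p A ≤ p i := fun i h1 h2 => mono_le hpm A i h1 h2
  have hploc2 : ∀ i, A2 ≤ i → i ≤ m+1 → p A2 ≤ p i := fun i h1 h2 => mono_le hpm A2 i h1 h2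
  -- vis/exc kills
  have htne : ∀ i, i ≤ m → t (i+1) ≠ c := by
    intro i him h
    have him1 : i + 1 ≤ m := by
      by_contra hh
      have h2 : t (i+1) = 2*n+3 := by rw [show i+1 = m+1 by omega, httop]
      omega
    exact (hcT' (i+1) (by omega) him1).1 h
  have hvis_cm1 : ¬ visCut m p t (c-1) := by
    rintro ⟨i, him, hpi, hti⟩
    have h1 : c < t (i+1) := by
      have := htne i him
      omega
    have h2 := hloc1 i h1
    have h3 := hploc i h2 (by omega)
    omega
  have hvisHigh : ∀ x, 2*n+2-c < x → x < p A2 → ¬ visCut m p t x := by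
    rintro x hx1 hx2 ⟨i, him, hpi, hti⟩
    have := hloc2 i (by omega)
    have := hploc2 i this (by omega)
    omega
  have hexc_low : ∀ x, x < c → ¬ excCut n m p t x := by
    rintro x hx (⟨_, h⟩ | ⟨_, d, hcand, hor⟩)
    · omega
    · obtain ⟨hd1, hd2, hwp, hwt, hcard⟩ := hcand
      have hdx : d = x := by omega
      subst hdx
      exact hcT (hwt (Finset.mem_Icc.2 ⟨by omega, by omega⟩))
  have hexc_high : ∀ x, 2*n+2-c < x → ¬ excCut n m p t x := by
    rintro x hx (⟨_, h⟩ | ⟨_, d, hcand, hor⟩)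
    · omega
    · obtain ⟨hd1, hd2, hwp, hwt, hcard⟩ := hcand
      have hdx : x = 2*n+2-d := by omega
      have hdc : d < c := by omega
      exact hcT (hwt (Finset.mem_Icc.2 ⟨by omega, by omega⟩))
  -- sup helpers
  have hsupmem : ∀ j v, 1 ≤ v →
      ((Finset.Icc (t j) (t (j+1) - 1)).filter
        (fun x => ¬ LSet (2*n+2) m p t (cutD n m p t) x)).sup id = v →
      (t j ≤ v ∧ v ≤ t (j+1) - 1 ∧ ¬ LSet (2*n+2) m p t (cutD n m p t) v) := by
    intro j v h1 hv
    set s := (Finset.Icc (t j) (t (j+1) - 1)).filter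
        (fun x => ¬ LSet (2*n+2) m p t (cutD n m p t) x) with hs
    rcases Finset.eq_empty_or_nonempty s with he | hne
    · rw [he] at hv
      simp at hv
      omega
    · obtain ⟨b, hbm, hsup⟩ := Finset.exists_mem_eq_sup s hne id
      have hbv : b = v := by rw [hv] at hsup; exact hsup.symm
      subst hbv
      have := Finset.mem_filter.1 hbm
      have := Finset.mem_Icc.1 this.1
      exact ⟨this.1, this.2, (Finset.mem_filter.1 hbm).2⟩
  have hsupge : ∀ j x, t j ≤ x → x ≤ t (j+1) - 1 →
      ¬ LSet (2*n+2) m p t (cutD n m p t) x →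
      x ≤ ((Finset.Icc (t j) (t (j+1) - 1)).filter
        (fun y => ¬ LSet (2*n+2) m p t (cutD n m p t) y)).sup id := by
    intro j x h1 h2 h3
    exact Finset.le_sup (f := id) (Finset.mem_filter.2 ⟨Finset.mem_Icc.2 ⟨h1, h2⟩, h3⟩)
  -- candidate builder
  have hmk_cand : ∀ x, c ≤ x → x ≤ n → cnt m t x = cnt m p x + 1 → cutCandidate n m p t x := by
    intro x h1 h2 h3
    refine ⟨by omega, h2, ?_, ?_, ?_⟩
    · exact fun y hy => hsubP (Finset.Icc_subset_Icc (by omega) le_rfl hy)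
    · exact fun y hy => hsubT (Finset.Icc_subset_Icc (by omega) le_rfl hy)
    · show ((Finset.Icc 1 m).image t ∩ Finset.Icc 1 x).card
          = ((Finset.Icc 1 m).image p ∩ Finset.Icc 1 x).card + 1
      rw [symInterCard hp0 hpm x, symInterCard ht0 htm x, h3]
  have hcand_to_cut : ∀ X d, cutCandidate n m p t d → (X = d ∨ X = 2*n+2-d) →
      cutD n m p t X := fun X d hcand hor => Or.inr (Or.inr ⟨htype, d, hcand, hor⟩)
  -- the coverage function
  have hcPt0 : ∃ j, 1 ≤ j ∧ j ≤ m ∧ (Ptil n m p t j = c ∨ Ptil n m p t j = 2*n+3-c) :=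
    hunpack (Ptil n m p t) c hc1 hPt
  have hwPt : ∀ e, c+1 ≤ e → e ≤ n+1 →
      ∃ j, 1 ≤ j ∧ j ≤ m ∧ (Ptil n m p t j = e ∨ Ptil n m p t j = 2*n+3-e) :=
    fun e h1 h2 => hunpack (Ptil n m p t) e (by omega) (hsubPt (Finset.mem_Icc.2 ⟨h1, h2⟩))
  have hcov : ∀ e, ∃ j, (c ≤ e ∧ e ≤ n+1) →
      (1 ≤ j ∧ j ≤ m ∧ (Ptil n m p t j = e ∨ Ptil n m p t j = 2*n+3-e)) := by
    intro e
    by_cases h : c ≤ e ∧ e ≤ n+1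
    · by_cases hec : e = c
      · subst hec
        obtain ⟨j, hj⟩ := hcPt0
        exact ⟨j, fun _ => hj⟩
      · obtain ⟨j, hj⟩ := hwPt e (by omega) h.2
        exact ⟨j, fun _ => hj⟩
    · exact ⟨0, fun h' => absurd h' h⟩
  choose F hF using hcov
  -- row location
  have rowloc : ∀ e, c ≤ e → e ≤ n+1 → A ≤ F e ∧ F e ≤ A2 := by
    intro e hec hen
    obtain ⟨hj1, hjm, hval⟩ := hF e ⟨hec, hen⟩
    set j := F e with hjdef
    have hvlb : c ≤ Ptil n m p t j := by omega
    have hvub : Ptil n m p t j ≤ 2*n+3-c := by omega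
    have hupper : j ≤ A2 := by
      by_contra hup
      push_neg at hup
      have htjb : 2*n+4-c ≤ t j := by
        have h1 : ¬ (t j ≤ 2*n+2-c) := by
          intro h
          have := (cnt_char htm (2*n+2-c) hj1 hjm).1 h
          omega
        have h2 := (hcT' j hj1 hjm).2
        omega
      by_cases hb1j : p j < t (j+1)
      · have hPtilj : Ptil n m p t j = p j := by
          unfold Ptil; rw [if_pos hb1j]
        have := hles j hj1 hjm
        omega
      · have hjm' : j + 1 ≤ m := by
          by_contra hh
          push_neg at hb1j
          have : t (j+1) = 2*n+3 := by rw [show j+1 = m+1 by omega, httop]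
          have := hp.ub j hj1 hjm
          omega
        by_cases hcutj : cutD n m p t (t (j+1) - 1)
        · have hPtilj : Ptil n m p t j = ((Finset.Icc (t j) (t (j+1) - 1)).filter
              (fun x => ¬ LSet (2*n+2) m p t (cutD n m p t) x)).sup id := by
            unfold Ptil; rw [if_neg hb1j, if_neg (fun h => h hcutj)]
          have := hsupmem j (Ptil n m p t j) (by omega) hPtilj.symm
          omega
        · have hPtilj : Ptil n m p t j =
              if t (j+1) = n+1 ∨ t (j+1) = n+2 then 2*n+3 - t (j+1) else t (j+1) := by
            unfold Ptil; rw [if_neg hb1j, if_pos hcutj]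
          have htj1 : t j < t (j+1) := htm j (j+1) (by omega) (by omega)
          by_cases hrefl : t (j+1) = n+1 ∨ t (j+1) = n+2
          · omega
          · rw [if_neg hrefl] at hPtilj
            omega
    have hlower : A ≤ j := by
      by_contra hlo
      push_neg at hlo
      have htj1c : t (j+1) ≤ c := le_trans (mono_le htm (j+1) A hlo (by omega)) htA
      by_cases hb1j : p j < t (j+1)
      · have hPtilj : Ptil n m p t j = p j := by
          unfold Ptil; rw [if_pos hb1j]
        omega
      · have hjm' : j + 1 ≤ m := by omega
        by_cases hcutj : cutD n m p t (t (j+1) - 1)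
        · have hPtilj : Ptil n m p t j = ((Finset.Icc (t j) (t (j+1) - 1)).filter
              (fun x => ¬ LSet (2*n+2) m p t (cutD n m p t) x)).sup id := by
            unfold Ptil; rw [if_neg hb1j, if_neg (fun h => h hcutj)]
          have := hsupmem j (Ptil n m p t j) (by omega) hPtilj.symm
          omega
        · have hPtilj : Ptil n m p t j =
              if t (j+1) = n+1 ∨ t (j+1) = n+2 then 2*n+3 - t (j+1) else t (j+1) := by
            unfold Ptil; rw [if_neg hb1j, if_pos hcutj]
          by_cases hrefl : t (j+1) = n+1 ∨ t (j+1) = n+2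
          · omega
          · rw [if_neg hrefl] at hPtilj
            have := htne j hjm
            omega
    exact ⟨hlower, hupper⟩
  -- injectivity and surjectivity
  have hFmaps : ∀ e ∈ Finset.Icc c (n+1), F e ∈ Finset.Icc A A2 := by
    intro e he
    have he' := Finset.mem_Icc.1 he
    exact Finset.mem_Icc.2 (rowloc e he'.1 he'.2)
  have hFinj : ∀ e1 ∈ Finset.Icc c (n+1), ∀ e2 ∈ Finset.Icc c (n+1),
      F e1 = F e2 → e1 = e2 := by
    intro e1 he1 e2 he2 heq
    have he1' := Finset.mem_Icc.1 he1
    have he2' := Finset.mem_Icc.1 he2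
    have h1 := (hF e1 ⟨he1'.1, he1'.2⟩).2.2
    have h2 := (hF e2 ⟨he2'.1, he2'.2⟩).2.2
    rw [heq] at h1
    omega
  have hsurj : ∀ b ∈ Finset.Icc A A2, ∃ e ∈ Finset.Icc c (n+1), F e = b := by
    have := Finset.surj_on_of_inj_on_of_card_le (s := Finset.Icc c (n+1))
      (t := Finset.Icc A A2) (fun e _ => F e)
      (fun e he => hFmaps e he) (fun e1 e2 he1 he2 h => hFinj e1 he1 e2 he2 h)
      (by rw [Nat.card_Icc, Nat.card_Icc]; omega)
    intro b hbmem
    obtain ⟨e, he, hbe⟩ := this b hbmem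
    exact ⟨e, he, hbe.symm⟩
  -- get the pair of row A2
  obtain ⟨e2, he2mem, hFe2⟩ := hsurj A2 (Finset.mem_Icc.2 ⟨by omega, le_rfl⟩)
  have he2' := Finset.mem_Icc.1 he2mem
  have hv2 : Ptil n m p t A2 = e2 ∨ Ptil n m p t A2 = 2*n+3-e2 := by
    have := (hF e2 ⟨he2'.1, he2'.2⟩).2.2
    rw [hFe2] at this
    exact this
  have hv2lb : c ≤ Ptil n m p t A2 := by omega
  have hv2ub : Ptil n m p t A2 ≤ 2*n+3-c := by omega
  by_cases hb1 : p A2 < t (A2+1)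
  · -- branch 1 at A2 : the case g = 1
    have hPtilA2 : Ptil n m p t A2 = p A2 := by
      unfold Ptil; rw [if_pos hb1]
    rw [hPtilA2] at hv2
    have hkey : p A2 = 2*n+3-c ∧ e2 = c := by omega
    have hX2 : A = a + 1 := by
      by_contra hne
      have hA2a2 : a2 + 2 ≤ A2 := by omega
      have h1 : p (a2+1) < p A2 := hpm (a2+1) A2 (by omega) (by omega)
      have h2 : 2*n+2-c < p (a2+1) := by
        by_contra hh
        push_neg at hh
        have := (cnt_char hpm (2*n+2-c) (j := a2+1) (by omega) (by omega)).1 hh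
        omega
      omega
    obtain ⟨e1, he1mem, hFe1⟩ := hsurj A (Finset.mem_Icc.2 ⟨le_rfl, by omega⟩)
    have he1' := Finset.mem_Icc.1 he1mem
    have he1c : c + 1 ≤ e1 := by
      rcases lt_or_eq_of_le he1'.1 with h | h
      · omega
      · exfalso
        have h2 : e1 = e2 := by omega
        rw [h2, hFe2] at hFe1
        omega
    have hv1 : Ptil n m p t A = e1 ∨ Ptil n m p t A = 2*n+3-e1 := by
      have := (hF e1 ⟨he1'.1, he1'.2⟩).2.2
      rw [hFe1] at this
      exact this
    have hS9tool : ∀ X x, c ≤ x → x ≤ n → cnt m t x = A → (X = x ∨ X = 2*n+2-x) →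
        cutD n m p t X := by
      intro X x h1 h2 h3 hor
      apply hcand_to_cut X x _ hor
      apply hmk_cand x h1 h2
      have hle1 : a ≤ cnt m p x := cnt_mono_d h1
      have hlt := hS3 x h1 h2
      omega
    have hcntA : ∀ x, c ≤ x → x < t (A+1) → cnt m t x = A :=
      fun x h1 h2 => cnt_between htm hAm (le_trans htA h1) h2
    by_cases hb1A : p A < t (A+1)
    · -- E1 kill (branch 1 at row A impossible)
      obtain ⟨k, hk1, hk2, hk3⟩ := hwT (n+1) (by omega) le_rfl
      have hkA : A+1 ≤ k := by
        by_contra hh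
        push_neg at hh
        have := mono_le htm k A (by omega) (by omega)
        omega
      have htA1n2 : t (A+1) ≤ n+2 := by
        have := mono_le htm (A+1) k hkA (by omega)
        omega
      have hA1m : A+1 ≤ m := by omega
      have htA1pA1 : t (A+1) ≤ p (A+1) := hles (A+1) (by omega) hA1m
      by_cases hple : p A ≤ n
      · have hcp : cnt m p (p A) = A :=
          cnt_between hpm hAm le_rfl (lt_of_lt_of_le hb1A htA1pA1)
        have hct : cnt m t (p A) = A :=
          cnt_between htm hAm (le_trans htA (le_of_lt hpA)) hb1A
        apply htype
        symm
        apply hb.2 (p A) (by omega) hple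
        · exact fun y hy => hsubP (Finset.Icc_subset_Icc (by omega) le_rfl hy)
        · exact fun y hy => hsubT (Finset.Icc_subset_Icc (by omega) le_rfl hy)
        · show ((Finset.Icc 1 m).image p ∩ Finset.Icc 1 (p A)).card
              = ((Finset.Icc 1 m).image t ∩ Finset.Icc 1 (p A)).card
          rw [symInterCard hp0 hpm (p A), symInterCard ht0 htm (p A), hcp, hct]
      · have hpAn1 : p A = n+1 := by omega
        have htA1eq : t (A+1) = n+2 := by omega
        have hcp : cnt m p (n+1) = A := cnt_between hpm hAm (by omega) (by omega)
        have hct : cnt m t (n+1) = A := cnt_between htm hAm (by omega) (by omega)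
        apply htype
        show tD n (symSet m t) = tD n (symSet m p)
        have hmemp : (n+1) ∈ symSet m p :=
          Finset.mem_image.2 ⟨A, Finset.mem_Icc.2 ⟨by omega, hAm⟩, hpAn1⟩
        have hmemt : (n+2) ∈ symSet m t :=
          Finset.mem_image.2 ⟨A+1, Finset.mem_Icc.2 ⟨by omega, hA1m⟩, htA1eq⟩
        have hcardt : (Finset.Icc 1 (n+1) \ symSet m t).card = n+1-A := by
          have h0 := Finset.card_inter_add_card_sdiff (Finset.Icc 1 (n+1)) (symSet m t)
          have h2 : (Finset.Icc 1 (n+1) ∩ symSet m t).card = A := by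
            rw [Finset.inter_comm]
            exact (symInterCard ht0 htm (n+1)).trans hct
          rw [Nat.card_Icc, h2] at h0
          omega
        have hcardp : (Finset.Icc 1 (n+1) \ symSet m p).card = n+1-A := by
          have h0 := Finset.card_inter_add_card_sdiff (Finset.Icc 1 (n+1)) (symSet m p)
          have h2 : (Finset.Icc 1 (n+1) ∩ symSet m p).card = A := by
            rw [Finset.inter_comm]
            exact (symInterCard hp0 hpm (n+1)).trans hcp
          rw [Nat.card_Icc, h2] at h0
          omega
        unfold tD
        rw [if_pos (Or.inr hmemt), if_pos (Or.inl hmemp), hcardt, hcardp]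
    · have hAm1 : A + 1 ≤ m := by
        by_contra hh
        push_neg at hb1A
        have : t (A+1) = 2*n+3 := by rw [show A+1 = m+1 by omega, httop]
        have := hp.ub A (by omega) hAm
        omega
      by_cases hcutA : cutD n m p t (t (A+1) - 1)
      · -- branch 3 at row A
        have hPtilA : Ptil n m p t A = ((Finset.Icc (t A) (t (A+1) - 1)).filter
            (fun x => ¬ LSet (2*n+2) m p t (cutD n m p t) x)).sup id := by
          unfold Ptil; rw [if_neg hb1A, if_neg (fun h => h hcutA)]
        have hVf := hsupmem A (Ptil n m p t A) (by omega) hPtilA.symm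
        rcases hv1 with hV | hV
        · -- value = e1
          obtain ⟨k, hk1, hk2, hk3⟩ := hwT e1 he1c he1'.2
          have hk3' : t k = 2*n+3-e1 := by
            rcases hk3 with h | h
            · exfalso
              have hkA1 : A+1 ≤ k := by
                by_contra hh
                push_neg at hh
                have := mono_le htm k A (by omega) (by omega)
                omega
              have := mono_le htm (A+1) k hkA1 (by omega)
              omega
            · exact h
          have hncut : ¬ cutD n m p t (2*n+3-e1) := by
            intro hcut
            apply hVf.2.2
            refine ⟨by omega, by omega, Or.inr ⟨k, hk1, hk2, by omega, ?_, Or.inl ⟨by omega, ?_⟩⟩⟩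
            · have := hles k hk1 hk2
              omega
            · rw [show 2*n+2+1 - Ptil n m p t A = 2*n+3-e1 by omega]
              exact hcut
          exact hncut (hS9tool (2*n+3-e1) (e1-1) (by omega) (by omega)
            (hcntA (e1-1) (by omega) (by omega)) (Or.inr (by omega)))
        · -- value = 2n+3−e1 : impossible
          obtain ⟨k, hk1, hk2, hk3⟩ := hwT e1 he1c he1'.2
          have hkA1 : A+1 ≤ k := by
            by_contra hh
            push_neg at hh
            have := mono_le htm k A (by omega) (by omega)
            omega
          have := mono_le htm (A+1) k hkA1 (by omega)
          omega
      · -- branch 2 at row A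
        have hPtilA : Ptil n m p t A =
            if t (A+1) = n+1 ∨ t (A+1) = n+2 then 2*n+3 - t (A+1) else t (A+1) := by
          unfold Ptil; rw [if_neg hb1A, if_pos hcutA]
        by_cases hrefl : t (A+1) = n+1 ∨ t (A+1) = n+2
        · rcases hrefl with h | h
          · exact hcutA (by
              rw [show t (A+1) - 1 = n by omega]
              exact hS9tool n n hcn le_rfl (hcntA n hcn (by omega)) (Or.inl rfl))
          · have hpAge : n+2 ≤ p A := by omega
            have hpAne : p A ≠ n+2 := by
              intro hpe
              apply hcutA
              rw [show t (A+1) - 1 = n+1 by omega]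
              exact Or.inr (Or.inl ⟨⟨A, by omega, hAm, Or.inl ⟨hpe, by omega⟩⟩, rfl⟩)
            have hgap := mono_gap hpm A2 (by omega) A (by omega)
            omega
        · rw [if_neg hrefl] at hPtilA
          push_neg at hrefl
          rcases hv1 with hV | hV
          · have he1n : e1 ≤ n := by omega
            exact hcutA (hS9tool (t (A+1) - 1) (e1-1) (by omega) (by omega)
              (hcntA (e1-1) (by omega) (by omega)) (Or.inl (by omega)))
          · have hτ : t (A+1) = 2*n+3-e1 := by omega
            have he1n : e1 ≤ n := by omega
            exact hcutA (hS9tool (t (A+1) - 1) e1 (by omega) he1n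
              (hcntA e1 (by omega) (by omega)) (Or.inr (by omega)))
  · -- p A2 ≥ t (A2+1)
    have hple : t (A2+1) ≤ p A2 := by omega
    by_cases hcut2 : cutD n m p t (t (A2+1) - 1)
    · -- branch 3 at A2
      have hPtilA2 : Ptil n m p t A2 = ((Finset.Icc (t A2) (t (A2+1) - 1)).filter
          (fun x => ¬ LSet (2*n+2) m p t (cutD n m p t) x)).sup id := by
        unfold Ptil; rw [if_neg hb1, if_neg (fun h => h hcut2)]
      by_cases hteq : t (A2+1) ≤ 2*n+4-c
      · have ht2 : t (A2+1) = 2*n+4-c := by omega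
        apply absurd hcut2
        rw [show t (A2+1) - 1 = 2*n+3-c by omega]
        rintro ((hv | hv) | hexc)
        · exact hvisHigh (2*n+3-c) (by omega) (by omega) hv
        · rw [show 2*n+2 - (2*n+3-c) = c-1 by omega] at hv
          exact hvis_cm1 hv
        · exact hexc_high (2*n+3-c) (by omega) hexc
      · have ht2 : 2*n+5-c ≤ t (A2+1) := by omega
        have hpA2b : 2*n+5-c ≤ p A2 := le_trans ht2 hple
        have hnL : ¬ LSet (2*n+2) m p t (cutD n m p t) (2*n+4-c) := by
          rintro ⟨h1, h2, hzl | ⟨j, hls⟩⟩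
          · rcases hzl with ⟨i, him, hpi, hti⟩
            have hi2 := hloc2 i (by omega)
            have := hploc2 i hi2 (by omega)
            omega
          · obtain ⟨hj1, hjm2, htj, hpj, hor⟩ := hls
            rw [show 2*n+2+1 - (2*n+4-c) = c-1 by omega] at htj hpj hor
            have hc2 : 2 ≤ c := by
              by_contra hh
              have : 0 < t j := by
                have := htm 0 j (by omega) (by omega)
                omega
              omega
            rcases hor with ⟨heq, hcd⟩ | ⟨heq, hcd⟩
            · rcases hcd with (hv | hv) | hexc
              · exact hvis_cm1 hv
              · rw [show 2*n+2 - (c-1) = 2*n+3-c by omega] at hv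
                exact hvisHigh (2*n+3-c) (by omega) (by omega) hv
              · exact hexc_low (c-1) (by omega) hexc
            · rcases hcd with (hv | hv) | hexc
              · rcases hv with ⟨i, him, hpi, hti⟩
                rcases Nat.lt_or_ge (c-1) (t (i+1)) with hbig | hsmall
                · have h3 : c < t (i+1) := by
                    have := htne i him
                    omega
                  have hi2 := hloc1 i h3
                  have := hploc i hi2 (by omega)
                  omega
                · have hti1 : t (i+1) = c-1 := by omega
                  have hi1m : i+1 ≤ m := by
                    by_contra hh
                    have : t (i+1) = 2*n+3 := by rw [show i+1 = m+1 by omega, httop]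
                    omega
                  have hji : j ≤ i+1 := by
                    by_contra hh
                    push_neg at hh
                    have h4 := hles (i+1) (by omega) hi1m
                    have h5 := hpm (i+1) j hh (by omega)
                    omega
                  have hij : i+1 ≤ j := by
                    by_contra hh
                    push_neg at hh
                    have := mono_le hpm j i (by omega) (by omega)
                    omega
                  have htj' : t j = c-1 := by rw [show j = i+1 by omega]; exact hti1
                  have hjA : j ≤ A := (cnt_char htm c hj1 hjm2).1 (by omega)
                  rcases lt_or_eq_of_le hjA with hlt | heqA
                  · have h4 : t (j+1) ≤ t A := mono_le htm (j+1) A hlt (by omega)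
                    have h5 : t j < t (j+1) := htm j (j+1) (by omega) (by omega)
                    have := htne j hjm2
                    omega
                  · subst heqA
                    omega
              · exact hvisHigh (2*n+2 - (c-2)) (by omega) (by omega) hv
              · exact hexc_low (c-2) (by omega) hexc
        have hge := hsupge A2 (2*n+4-c) (by omega) (by omega) hnL
        rw [← hPtilA2] at hge
        omega
    · -- branch 2 at A2
      have hPtilA2 : Ptil n m p t A2 =
          if t (A2+1) = n+1 ∨ t (A2+1) = n+2 then 2*n+3 - t (A2+1) else t (A2+1) := by
        unfold Ptil; rw [if_neg hb1, if_pos hcut2]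
      by_cases hrefl : t (A2+1) = n+1 ∨ t (A2+1) = n+2
      · omega
      · rw [if_neg hrefl] at hPtilA2
        omega
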